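/- Let A : ℝ^N → ℝ^N be continuous, let ρ : ℝ^N → ℝ be C¹, set A' := A + ∇ρ, and let ℏ ∈ (0,1], f ∈ 𝒮(ℝ^N × ℝ^N). Then the magnetic Weyl quantization is gauge covariant: for every u ∈ L²(ℝ^N), Op^{A'}_ℏ(f) u = e^{(i/ℏ)ρ} · ( Op^A_ℏ(f) ( e^{-(i/ℏ)ρ} u ) ), i.e. Op^{A'}_ℏ(f) = e^{(i/ℏ)ρ} Op^A_ℏ(f) e^{-(i/ℏ)ρ} as operators on L²(ℝ^N), where e^{±(i/ℏ)ρ} denote the unitary multiplication operators by x ↦ e^{±(i/ℏ)ρ(x)}. -/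

import Mathlib

open MeasureTheory Filter Topology Real

noncomputable section

abbrev Vec (N : ℕ) := Fin N → ℝ

/-- Circulation `Γ^A[x,y]` of the vector potential `A` along the segment from `x` to `y`. -/
def circA {N : ℕ} (A : Vec N → Vec N) (x y : Vec N) : ℝ :=
  ∫ s in (0:ℝ)..1, ∑ j, (y j - x j) * A (x + s • (y - x)) j

/-- Flux `Γ^B⟨a,b,c⟩` of the magnetic field `B` through the triangle with vertices
`a`, `b`, `c`, given by the standard parametrization. -/
def fluxB {N : ℕ} (B : Fin N → Fin N → Vec N → ℝ) (a b c : Vec N) : ℝ :=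
  ∑ j, ∑ k, (b j - a j) * (c k - b k) *
    ∫ μ in (0:ℝ)..1, ∫ ν in (0:ℝ)..1, μ * B j k (a + μ • (b - a) + (μ * ν) • (c - b))

/-- The magnetic Weyl quantization `Op^A_ℏ(f)` applied to `u`, as a function on `ℝ^N`. -/
def opA {N : ℕ} (A : Vec N → Vec N) (ℏ : ℝ) (f : Vec N × Vec N → ℂ) (u : Vec N → ℂ) :
    Vec N → ℂ :=
  fun x => (((2*π*ℏ)^N : ℝ) : ℂ)⁻¹ * ∫ y : Vec N, ∫ η : Vec N,
    Complex.exp (Complex.I / (ℏ:ℂ) * ((∑ j, (x j - y j) * η j : ℝ) : ℂ)) *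
    Complex.exp (-(Complex.I / (ℏ:ℂ)) * ((circA A x y : ℝ) : ℂ)) *
    f ((2:ℝ)⁻¹ • (x + y), η) * u y

lemma rep_sub {N : ℕ} (x y : Vec N) :
    (y - x) = ∑ j, (y j - x j) • (Pi.single j 1 : Vec N) := by
  funext k
  simp [Finset.sum_apply, Pi.single_apply]

lemma grad_circ {N : ℕ} (ρ : Vec N → ℝ) (hρ : ContDiff ℝ 1 ρ) (x y : Vec N) :
    ∫ s in (0:ℝ)..1, ∑ j, (y j - x j) * fderiv ℝ ρ (x + s • (y - x)) (Pi.single j 1)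
      = ρ y - ρ x := by
  have hdiff := hρ.differentiable one_ne_zero
  have hγ : Continuous fun s : ℝ => x + s • (y - x) :=
    continuous_const.add (continuous_id.smul continuous_const)
  have hrep : ∀ s : ℝ, (∑ j, (y j - x j) * fderiv ℝ ρ (x + s • (y - x)) (Pi.single j 1))
      = fderiv ℝ ρ (x + s • (y - x)) (y - x) := by
    intro s
    rw [rep_sub x y, map_sum]
    simp [smul_eq_mul]
  have hcont : Continuous fun s : ℝ => fderiv ℝ ρ (x + s • (y - x)) (y - x) :=
    ((hρ.continuous_fderiv one_ne_zero).comp hγ).clm_apply continuous_const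
  have key : ∀ s ∈ Set.uIcc (0:ℝ) 1, HasDerivAt (fun t : ℝ => ρ (x + t • (y - x)))
      (fderiv ℝ ρ (x + s • (y - x)) (y - x)) s := by
    intro s _
    have h1 : HasDerivAt (fun t : ℝ => x + t • (y - x)) (y - x) s := by
      simpa using ((hasDerivAt_id s).smul_const (y - x)).const_add x
    exact (hdiff _).hasFDerivAt.comp_hasDerivAt s h1
  rw [intervalIntegral.integral_congr (g := fun s => fderiv ℝ ρ (x + s • (y - x)) (y - x))
    (fun s _ => hrep s)]
  have := intervalIntegral.integral_eq_sub_of_hasDerivAt key ((hcont.intervalIntegrable 0 1))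
  simpa using this

lemma circA_add_grad {N : ℕ} (A : Vec N → Vec N) (hA : Continuous A)
    (ρ : Vec N → ℝ) (hρ : ContDiff ℝ 1 ρ) (x y : Vec N) :
    circA (fun z => A z + fun j => fderiv ℝ ρ z (Pi.single j 1)) x y
      = circA A x y + (ρ y - ρ x) := by
  have hγ : Continuous fun s : ℝ => x + s • (y - x) :=
    continuous_const.add (continuous_id.smul continuous_const)
  have h1 : Continuous fun s : ℝ => ∑ j, (y j - x j) * A (x + s • (y - x)) j := by
    apply continuous_finset_sum
    intro j _
    exact continuous_const.mul ((continuous_apply j).comp (hA.comp hγ))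
  have h2 : Continuous fun s : ℝ =>
      ∑ j, (y j - x j) * fderiv ℝ ρ (x + s • (y - x)) (Pi.single j 1) := by
    apply continuous_finset_sum
    intro j _
    exact continuous_const.mul
      (((hρ.continuous_fderiv one_ne_zero).comp hγ).clm_apply continuous_const)
  unfold circA
  have : ∀ s : ℝ, (∑ j, (y j - x j) *
        ((fun z => A z + fun j => fderiv ℝ ρ z (Pi.single j 1)) (x + s • (y - x))) j)
      = (∑ j, (y j - x j) * A (x + s • (y - x)) j)
        + ∑ j, (y j - x j) * fderiv ℝ ρ (x + s • (y - x)) (Pi.single j 1) := by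
    intro s
    rw [← Finset.sum_add_distrib]
    congr 1; funext j
    simp [mul_add]
  rw [intervalIntegral.integral_congr (fun s _ => this s),
    intervalIntegral.integral_add (h1.intervalIntegrable 0 1) (h2.intervalIntegrable 0 1),
    grad_circ ρ hρ x y]

/-- Gauge covariance of the magnetic Weyl quantization:
`Op^{A+∇ρ}_ℏ(f) = e^{(i/ℏ)ρ} Op^A_ℏ(f) e^{-(i/ℏ)ρ}`. -/
theorem gauge_covariance {N : ℕ} (A : Vec N → Vec N) (hA : Continuous A)
    (ρ : Vec N → ℝ) (hρ : ContDiff ℝ 1 ρ)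
    (ℏ : ℝ) (hℏ : ℏ ∈ Set.Ioc (0:ℝ) 1) (f : SchwartzMap (Vec N × Vec N) ℂ)
    (u : Vec N → ℂ) (hu : MemLp u 2 (volume : Measure (Vec N))) (x : Vec N) :
    opA (fun y => A y + fun j => fderiv ℝ ρ y (Pi.single j 1)) ℏ ⇑f u x =
      Complex.exp (Complex.I/(ℏ:ℂ) * ((ρ x : ℝ) : ℂ)) *
        opA A ℏ ⇑f (fun y => Complex.exp (-(Complex.I/(ℏ:ℂ)) * ((ρ y : ℝ) : ℂ)) * u y) x := by
  simp only [opA, circA_add_grad A hA ρ hρ x]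
  rw [mul_left_comm]
  congr 1
  rw [← MeasureTheory.integral_const_mul]
  congr 1
  funext y
  rw [← MeasureTheory.integral_const_mul]
  congr 1
  funext η
  push_cast
  rw [show -(Complex.I / (ℏ:ℂ)) * ((circA A x y : ℂ) + ((ρ y : ℂ) - (ρ x : ℂ)))
      = -(Complex.I / (ℏ:ℂ)) * (circA A x y : ℂ)
        + (-(Complex.I / (ℏ:ℂ)) * (ρ y : ℂ) + Complex.I / (ℏ:ℂ) * (ρ x : ℂ)) by ring,
    Complex.exp_add, Complex.exp_add]
  ring

end
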